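/- arXiv:2308.09214 — 2 statements merged into one kernel-verified Lean document; each statement's English description precedes it below -/
import Mathlib

section
/- For any two measure-valued kernels W₁, W₂ : [0,1]² → P([−1,1]) and any measurable sets S, T ⊆ [0,1], the Wasserstein-1 distance between the measures ∫_{S×T} W₁(x,y) dx dy and ∫_{S×T} W₂(x,y) dx dy equals sup over 1-bounded-Lipschitz ψ of |∫_{S×T} (Γ(ψ,W₁) − Γ(ψ,W₂))(x,y) dx dy|. Consequently, sup_{ψ ∈ L} ‖Γ(ψ,W₁) − Γ(ψ,W₂)‖_□ = sup_{S,T} W₁-dist(∫_{S×T} W₁, ∫_{S×T} W₂), i.e., the generalized cut norm coincides with the Wasserstein cut quantity. -/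
open MeasureTheory Real Set

/-- `Γ(ψ,W)(x,y) = ∫ ψ(ζ) W(x,y)(dζ)`. -/
noncomputable def Gamma (ψ : ℝ → ℝ) (W : ℝ × ℝ → Measure ℝ) (p : ℝ × ℝ) : ℝ :=
  ∫ ζ, ψ ζ ∂(W p)

/-- Test functions with bounded-Lipschitz norm at most 1. -/
def BLball : Set (ℝ → ℝ) :=
  {ψ | (∀ x ∈ Icc (-1 : ℝ) 1, |ψ x| ≤ 1) ∧ LipschitzOnWith 1 ψ (Icc (-1 : ℝ) 1)}

/-- Wasserstein-1 distance (dual form) between two finite measures of equal mass: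
`sup_{ψ ∈ L} ∫ ψ d(μ−ν)`. -/
noncomputable def W1dist (μ ν : Measure ℝ) : ℝ :=
  ⨆ ψ ∈ BLball, ((∫ ζ, ψ ζ ∂μ) - ∫ ζ, ψ ζ ∂ν)

/-- The measure `∫_{S×T} W(x,y) dx dy` obtained by integrating a measure-valued
kernel over `(S ∩ [0,1]) × (T ∩ [0,1])`. -/
noncomputable def intKernel (W : ℝ × ℝ → Measure ℝ) (S T : Set ℝ) : Measure ℝ :=
  ((volume : Measure (ℝ × ℝ)).restrict ((S ∩ Icc 0 1) ×ˢ (T ∩ Icc 0 1))).bind W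

/-! ### Auxiliary suprema lemmas over `ℝ` -/

private lemma my_biSup_le {α : Type*} {B : Set α} {f : α → ℝ} {C : ℝ} (hC : 0 ≤ C)
    (hb : ∀ a ∈ B, f a ≤ C) : (⨆ a ∈ B, f a) ≤ C :=
  Real.iSup_le (fun a => Real.iSup_le (fun h => hb a h) hC) hC

private lemma my_le_biSup {α : Type*} {B : Set α} {f : α → ℝ} {C : ℝ}
    (hb : ∀ a ∈ B, f a ≤ C) {a : α} (ha : a ∈ B) : f a ≤ ⨆ a ∈ B, f a := by
  have hbdd : BddAbove (Set.range fun a => ⨆ _ : a ∈ B, f a) := by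
    refine ⟨max C 0, ?_⟩
    rintro x ⟨a, rfl⟩
    exact Real.iSup_le (fun h => (hb a h).trans (le_max_left _ _)) (le_max_right _ _)
  calc f a = ⨆ _ : a ∈ B, f a := (ciSup_pos (f := fun _ => f a) ha).symm
    _ ≤ _ := le_ciSup hbdd a

private lemma my_biSup_abs {α : Type*} {B : Set α} {f : α → ℝ} {C : ℝ}
    (hne : B.Nonempty) (hC : 0 ≤ C) (hb : ∀ a ∈ B, |f a| ≤ C)
    (hsym : ∀ a ∈ B, ∃ b ∈ B, f b = -f a) :
    (⨆ a ∈ B, f a) = ⨆ a ∈ B, |f a| := by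
  have hb' : ∀ a ∈ B, f a ≤ C := fun a ha => (le_abs_self _).trans (hb a ha)
  have h1 : ∀ a ∈ B, f a ≤ ⨆ a ∈ B, f a := fun a ha => my_le_biSup hb' ha
  obtain ⟨a₀, ha₀⟩ := hne
  obtain ⟨b₀, hb₀, hfb₀⟩ := hsym a₀ ha₀
  have h0 : 0 ≤ ⨆ a ∈ B, f a := by
    have := h1 a₀ ha₀; have := h1 b₀ hb₀; linarith [hfb₀]
  have habs : ∀ a ∈ B, |f a| ≤ ⨆ a ∈ B, f a := by
    intro a ha
    obtain ⟨b, hbB, hfb⟩ := hsym a ha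
    have := h1 a ha; have := h1 b hbB
    rw [abs_le]; constructor <;> linarith [hfb]
  have h0' : 0 ≤ ⨆ a ∈ B, |f a| :=
    le_trans (abs_nonneg (f a₀)) (my_le_biSup hb ha₀)
  refine le_antisymm ?_ ?_
  · exact Real.iSup_le (fun a => Real.iSup_le
      (fun ha => (le_abs_self _).trans (my_le_biSup hb ha)) h0') h0'
  · exact Real.iSup_le (fun a => Real.iSup_le (fun ha => habs a ha) h0) h0

private lemma my_biSup_comm {α β : Type*} [Nonempty β] {B : Set α} (hB : B.Nonempty)
    {f : α → β → ℝ} {C : ℝ} (hC : 0 ≤ C)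
    (h0 : ∀ a ∈ B, ∀ b, 0 ≤ f a b) (hb : ∀ a ∈ B, ∀ b, f a b ≤ C) :
    (⨆ a ∈ B, ⨆ b, f a b) = ⨆ b, ⨆ a ∈ B, f a b := by
  obtain ⟨a₀, ha₀⟩ := hB
  obtain ⟨b₀⟩ := ‹Nonempty β›
  have hinner1 : ∀ a ∈ B, (⨆ b, f a b) ≤ C := fun a ha => Real.iSup_le (hb a ha) hC
  have hinner2 : ∀ b, (⨆ a ∈ B, f a b) ≤ C := fun b =>
    my_biSup_le hC (fun a ha => hb a ha b)
  have hbdd2 : BddAbove (Set.range fun b => ⨆ a ∈ B, f a b) := by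
    refine ⟨C, ?_⟩; rintro x ⟨b, rfl⟩; exact hinner2 b
  have hbdd1 : ∀ a ∈ B, BddAbove (Set.range (f a)) := by
    intro a ha; exact ⟨C, by rintro x ⟨b, rfl⟩; exact hb a ha b⟩
  have hRge : ∀ b, f a₀ b ≤ ⨆ b, ⨆ a ∈ B, f a b := fun b =>
    le_trans (my_le_biSup (fun a ha => hb a ha b) ha₀) (le_ciSup hbdd2 b)
  have hRnn : 0 ≤ ⨆ b, ⨆ a ∈ B, f a b := le_trans (h0 a₀ ha₀ b₀) (hRge b₀)
  have hLge : ∀ b, f a₀ b ≤ ⨆ a ∈ B, ⨆ b, f a b := fun b =>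
    le_trans (le_ciSup (hbdd1 a₀ ha₀) b) (my_le_biSup hinner1 ha₀)
  have hLnn : 0 ≤ ⨆ a ∈ B, ⨆ b, f a b := le_trans (h0 a₀ ha₀ b₀) (hLge b₀)
  refine le_antisymm ?_ ?_
  · refine Real.iSup_le (fun a => Real.iSup_le (fun ha => Real.iSup_le (fun b => ?_) hRnn) hRnn) hRnn
    exact le_trans (my_le_biSup (fun a' ha' => hb a' ha' b) ha) (le_ciSup hbdd2 b)
  · refine Real.iSup_le (fun b => Real.iSup_le (fun a => Real.iSup_le (fun ha => ?_) hLnn) hLnn) hLnn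
    exact le_trans (le_ciSup (hbdd1 a ha) b) (my_le_biSup hinner1 ha)

/-! ### Clamping -/

noncomputable def myClamp (x : ℝ) : ℝ := max (-1) (min x 1)

lemma myClamp_mem (x : ℝ) : myClamp x ∈ Icc (-1:ℝ) 1 :=
  ⟨le_max_left _ _, max_le (by norm_num) (min_le_right _ _)⟩

lemma myClamp_eq {x : ℝ} (hx : x ∈ Icc (-1:ℝ) 1) : myClamp x = x := by
  rcases hx with ⟨h1, h2⟩
  unfold myClamp
  rw [min_eq_left h2, max_eq_right h1]

lemma myClamp_continuous : Continuous myClamp :=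
  continuous_const.max ((continuous_id.min continuous_const))

/-! ### Integration against measure-valued kernels -/

private lemma my_int_eq {ν : Measure ℝ} [IsFiniteMeasure ν] {g : ℝ → ℝ}
    (hg : Measurable g) (hb : ∀ x, |g x| ≤ 1) :
    ∫ ζ, g ζ ∂ν = (∫⁻ x, ENNReal.ofReal (g x + 1) ∂ν).toReal - (ν univ).toReal := by
  have hint : Integrable g ν :=
    (integrable_const (1:ℝ)).mono' hg.aestronglyMeasurable
      (Filter.Eventually.of_forall (fun x => by simpa using hb x))
  have h1 : ∫ ζ, (g ζ + 1) ∂ν = (∫⁻ x, ENNReal.ofReal (g x + 1) ∂ν).toReal := by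
    rw [integral_eq_lintegral_of_nonneg_ae (f := fun ζ => g ζ + 1)
      (Filter.Eventually.of_forall
        (fun x => by simp only [Pi.zero_apply]; linarith [(abs_le.1 (hb x)).1]))
      ((hg.add measurable_const).aestronglyMeasurable)]
  have h2 : ∫ ζ, (g ζ + 1) ∂ν = (∫ ζ, g ζ ∂ν) + (ν univ).toReal := by
    rw [integral_add hint (integrable_const 1), integral_const]; simp [Measure.real]
  linarith

private lemma my_meas_G {W : ℝ × ℝ → Measure ℝ} (hm : Measurable W)
    (hW : ∀ p, IsProbabilityMeasure (W p)) {g : ℝ → ℝ}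
    (hg : Measurable g) (hb : ∀ x, |g x| ≤ 1) :
    Measurable (fun p => ∫ ζ, g ζ ∂(W p)) := by
  have hh : Measurable (fun x => ENNReal.ofReal (g x + 1)) :=
    (hg.add measurable_const).ennreal_ofReal
  have heq : (fun p => ∫ ζ, g ζ ∂(W p))
      = fun p => (∫⁻ x, ENNReal.ofReal (g x + 1) ∂(W p)).toReal - 1 := by
    funext p
    haveI := hW p
    rw [my_int_eq hg hb]
    simp
  rw [heq]
  exact (((Measure.measurable_lintegral hh).comp hm).ennreal_toReal).sub measurable_const

private lemma my_G_bound {W : ℝ × ℝ → Measure ℝ}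
    (hW : ∀ p, IsProbabilityMeasure (W p)) {g : ℝ → ℝ}
    (hb : ∀ x, |g x| ≤ 1) (p : ℝ × ℝ) : |∫ ζ, g ζ ∂(W p)| ≤ 1 := by
  haveI := hW p
  have := norm_integral_le_of_norm_le_const (μ := W p) (f := g) (C := 1)
    (Filter.Eventually.of_forall (fun x => by simpa using hb x))
  simpa using this

private lemma my_integral_bind {μ : Measure (ℝ × ℝ)} [IsFiniteMeasure μ]
    {W : ℝ × ℝ → Measure ℝ} (hm : Measurable W)
    (hW : ∀ p, IsProbabilityMeasure (W p)) {g : ℝ → ℝ}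
    (hg : Measurable g) (hb : ∀ x, |g x| ≤ 1) :
    ∫ ζ, g ζ ∂(μ.bind W) = ∫ p, (∫ ζ, g ζ ∂(W p)) ∂μ := by
  set h : ℝ → ENNReal := fun x => ENNReal.ofReal (g x + 1) with hh_def
  have hh : Measurable h := (hg.add measurable_const).ennreal_ofReal
  have hWuniv : ∀ p, W p univ = 1 := fun p => (hW p).measure_univ
  have hbind_univ : μ.bind W univ = μ univ := by
    rw [Measure.bind_apply MeasurableSet.univ hm.aemeasurable]
    simp [hWuniv]
  haveI : IsFiniteMeasure (μ.bind W) := ⟨by rw [hbind_univ]; exact measure_lt_top μ univ⟩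
  have hle2 : ∀ x, h x ≤ 2 := by
    intro x
    have : g x + 1 ≤ 2 := by linarith [(abs_le.1 (hb x)).2]
    calc h x ≤ ENNReal.ofReal 2 := ENNReal.ofReal_le_ofReal this
      _ = 2 := by norm_num
  have hF2 : ∀ p, (∫⁻ x, h x ∂(W p)) ≤ 2 := by
    intro p
    calc (∫⁻ x, h x ∂(W p)) ≤ ∫⁻ _, 2 ∂(W p) := lintegral_mono hle2
      _ = 2 := by rw [lintegral_const, hWuniv]; ring
  have hFmeas : Measurable (fun p => ∫⁻ x, h x ∂(W p)) :=
    (Measure.measurable_lintegral hh).comp hm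
  have hlhs : ∫ ζ, g ζ ∂(μ.bind W)
      = (∫⁻ p, ∫⁻ x, h x ∂(W p) ∂μ).toReal - (μ univ).toReal := by
    rw [my_int_eq hg hb, hbind_univ, Measure.lintegral_bind hm.aemeasurable hh.aemeasurable]
  have hpt : ∀ p, (∫ ζ, g ζ ∂(W p)) = (∫⁻ x, h x ∂(W p)).toReal - 1 := by
    intro p
    haveI := hW p
    rw [my_int_eq hg hb]
    simp [hh_def]
  rw [hlhs, integral_congr_ae (Filter.Eventually.of_forall hpt)]
  have hFint : Integrable (fun p => (∫⁻ x, h x ∂(W p)).toReal) μ := by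
    refine (integrable_const (2:ℝ)).mono' hFmeas.ennreal_toReal.aestronglyMeasurable
      (Filter.Eventually.of_forall (fun p => ?_))
    rw [Real.norm_eq_abs, abs_of_nonneg ENNReal.toReal_nonneg]
    exact ENNReal.toReal_le_of_le_ofReal (by norm_num) (by simpa using hF2 p)
  rw [integral_sub hFint (integrable_const 1), integral_const, integral_toReal
    (hFmeas.aemeasurable)
    (Filter.Eventually.of_forall (fun p => lt_of_le_of_lt (hF2 p) (by norm_num)))]
  simp [Measure.real]

/-! ### Properties of BLball test functions -/

private lemma zero_mem_BLball : (fun _ : ℝ => (0:ℝ)) ∈ BLball := by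
  constructor
  · intro x _; norm_num
  · intro x _ y _; simp

private lemma neg_mem_BLball {ψ : ℝ → ℝ} (hψ : ψ ∈ BLball) : (fun x => -ψ x) ∈ BLball := by
  obtain ⟨hb, hl⟩ := hψ
  constructor
  · intro x hx; simpa using hb x hx
  · rw [lipschitzOnWith_iff_dist_le_mul] at hl ⊢
    intro x hx y hy
    simpa [dist_neg_neg] using hl x hx y hy

private lemma g_cont {ψ : ℝ → ℝ} (hψ : ψ ∈ BLball) : Continuous (ψ ∘ myClamp) :=
  (hψ.2.continuousOn).comp_continuous myClamp_continuous myClamp_mem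

private lemma g_bound {ψ : ℝ → ℝ} (hψ : ψ ∈ BLball) (x : ℝ) : |(ψ ∘ myClamp) x| ≤ 1 :=
  hψ.1 _ (myClamp_mem x)

/-- With `W p` supported on `[-1,1]`, `Γ(ψ,W) p` can be computed via the clamped function. -/
private lemma gamma_eq {W : ℝ × ℝ → Measure ℝ} (h : ∀ p, IsProbabilityMeasure (W p))
    (hs : ∀ p, W p (Icc (-1 : ℝ) 1) = 1) {ψ : ℝ → ℝ} (hψ : ψ ∈ BLball) (p : ℝ × ℝ) :
    Gamma ψ W p = ∫ ζ, (ψ ∘ myClamp) ζ ∂(W p) := by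
  haveI := h p
  have hcompl : W p (Icc (-1:ℝ) 1)ᶜ = 0 := by
    simp [measure_compl measurableSet_Icc (measure_ne_top _ _), hs p]
  apply integral_congr_ae
  rw [Filter.EventuallyEq, ae_iff]
  refine measure_mono_null (fun x hx => ?_) hcompl
  intro hmem
  exact hx (by simp [Function.comp, myClamp_eq hmem])

private lemma vol_fin {S T : Set ℝ} (hS1 : S ⊆ Icc 0 1) (hT1 : T ⊆ Icc 0 1) :
    (volume : Measure (ℝ × ℝ)) (S ×ˢ T) ≤ 1 := by
  calc (volume : Measure (ℝ × ℝ)) (S ×ˢ T)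
      ≤ volume ((Icc (0:ℝ) 1) ×ˢ (Icc (0:ℝ) 1)) := measure_mono (prod_mono hS1 hT1)
    _ = 1 := by rw [Measure.volume_eq_prod, Measure.prod_prod, Real.volume_Icc]; norm_num

private lemma int_intKernel {W : ℝ × ℝ → Measure ℝ} (hm : Measurable W)
    (h : ∀ p, IsProbabilityMeasure (W p)) (hs : ∀ p, W p (Icc (-1 : ℝ) 1) = 1)
    {ψ : ℝ → ℝ} (hψ : ψ ∈ BLball) {S T : Set ℝ}
    (hS1 : S ⊆ Icc 0 1) (hT1 : T ⊆ Icc 0 1) :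
    ∫ ζ, ψ ζ ∂(intKernel W S T) = ∫ p in S ×ˢ T, (∫ ζ, (ψ ∘ myClamp) ζ ∂(W p)) := by
  have hSe : S ∩ Icc 0 1 = S := inter_eq_self_of_subset_left hS1
  have hTe : T ∩ Icc 0 1 = T := inter_eq_self_of_subset_left hT1
  haveI : IsFiniteMeasure ((volume : Measure (ℝ × ℝ)).restrict (S ×ˢ T)) :=
    ⟨by rw [Measure.restrict_apply_univ]
        exact lt_of_le_of_lt (vol_fin hS1 hT1) ENNReal.one_lt_top⟩
  have hg := (g_cont hψ).measurable
  have hgb := g_bound hψ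
  have hν : intKernel W S T = ((volume : Measure (ℝ × ℝ)).restrict (S ×ˢ T)).bind W := by
    rw [intKernel, hSe, hTe]
  have hcompl : (((volume : Measure (ℝ × ℝ)).restrict (S ×ˢ T)).bind W) (Icc (-1:ℝ) 1)ᶜ = 0 := by
    rw [Measure.bind_apply measurableSet_Icc.compl hm.aemeasurable]
    have h0 : ∀ p, W p (Icc (-1:ℝ) 1)ᶜ = 0 := fun p => by
      haveI := h p
      simp [measure_compl measurableSet_Icc (measure_ne_top _ _), hs p]
    simp [h0]
  have haeq : ∫ ζ, ψ ζ ∂(((volume : Measure (ℝ × ℝ)).restrict (S ×ˢ T)).bind W)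
      = ∫ ζ, (ψ ∘ myClamp) ζ ∂(((volume : Measure (ℝ × ℝ)).restrict (S ×ˢ T)).bind W) := by
    apply integral_congr_ae
    rw [Filter.EventuallyEq, ae_iff]
    refine measure_mono_null (fun x hx => ?_) hcompl
    intro hmem
    exact hx (by simp [Function.comp, myClamp_eq hmem])
  rw [hν, haeq, my_integral_bind hm h hg hgb]

private lemma key_diff {W₁ W₂ : ℝ × ℝ → Measure ℝ}
    (h₁ : ∀ p, IsProbabilityMeasure (W₁ p)) (h₂ : ∀ p, IsProbabilityMeasure (W₂ p))
    (hs₁ : ∀ p, W₁ p (Icc (-1 : ℝ) 1) = 1) (hs₂ : ∀ p, W₂ p (Icc (-1 : ℝ) 1) = 1)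
    (hm₁ : Measurable W₁) (hm₂ : Measurable W₂) {S T : Set ℝ}
    (hS1 : S ⊆ Icc 0 1) (hT1 : T ⊆ Icc 0 1) {ψ : ℝ → ℝ} (hψ : ψ ∈ BLball) :
    (∫ ζ, ψ ζ ∂(intKernel W₁ S T)) - ∫ ζ, ψ ζ ∂(intKernel W₂ S T)
      = ∫ z in S ×ˢ T, (Gamma ψ W₁ z - Gamma ψ W₂ z) := by
  haveI : IsFiniteMeasure ((volume : Measure (ℝ × ℝ)).restrict (S ×ˢ T)) :=
    ⟨by rw [Measure.restrict_apply_univ]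
        exact lt_of_le_of_lt (vol_fin hS1 hT1) ENNReal.one_lt_top⟩
  have hg := (g_cont hψ).measurable
  have hgb := g_bound hψ
  have hint1 : Integrable (fun p => ∫ ζ, (ψ ∘ myClamp) ζ ∂(W₁ p))
      ((volume : Measure (ℝ × ℝ)).restrict (S ×ˢ T)) :=
    (integrable_const (1:ℝ)).mono' (my_meas_G hm₁ h₁ hg hgb).aestronglyMeasurable
      (Filter.Eventually.of_forall fun p => by simpa using my_G_bound h₁ hgb p)
  have hint2 : Integrable (fun p => ∫ ζ, (ψ ∘ myClamp) ζ ∂(W₂ p))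
      ((volume : Measure (ℝ × ℝ)).restrict (S ×ˢ T)) :=
    (integrable_const (1:ℝ)).mono' (my_meas_G hm₂ h₂ hg hgb).aestronglyMeasurable
      (Filter.Eventually.of_forall fun p => by simpa using my_G_bound h₂ hgb p)
  rw [int_intKernel hm₁ h₁ hs₁ hψ hS1 hT1, int_intKernel hm₂ h₂ hs₂ hψ hS1 hT1,
    ← integral_sub hint1 hint2]
  exact integral_congr_ae (Filter.Eventually.of_forall fun z => by
    simp only [gamma_eq h₁ hs₁ hψ, gamma_eq h₂ hs₂ hψ])

private lemma key_bound {W₁ W₂ : ℝ × ℝ → Measure ℝ}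
    (h₁ : ∀ p, IsProbabilityMeasure (W₁ p)) (h₂ : ∀ p, IsProbabilityMeasure (W₂ p))
    (hs₁ : ∀ p, W₁ p (Icc (-1 : ℝ) 1) = 1) (hs₂ : ∀ p, W₂ p (Icc (-1 : ℝ) 1) = 1)
    (hm₁ : Measurable W₁) (hm₂ : Measurable W₂) {S T : Set ℝ}
    (hS1 : S ⊆ Icc 0 1) (hT1 : T ⊆ Icc 0 1) {ψ : ℝ → ℝ} (hψ : ψ ∈ BLball) :
    |∫ z in S ×ˢ T, (Gamma ψ W₁ z - Gamma ψ W₂ z)| ≤ 2 := by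
  have hg := (g_cont hψ).measurable
  have hgb := g_bound hψ
  have heq : ∫ z in S ×ˢ T, (Gamma ψ W₁ z - Gamma ψ W₂ z)
      = ∫ z in S ×ˢ T,
          ((∫ ζ, (ψ ∘ myClamp) ζ ∂(W₁ z)) - ∫ ζ, (ψ ∘ myClamp) ζ ∂(W₂ z)) :=
    integral_congr_ae (Filter.Eventually.of_forall fun z => by
      simp only [gamma_eq h₁ hs₁ hψ, gamma_eq h₂ hs₂ hψ])
  rw [heq]
  have hnorm := norm_setIntegral_le_of_norm_le_const (μ := volume) (s := S ×ˢ T) (C := 2)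
    (f := fun z => (∫ ζ, (ψ ∘ myClamp) ζ ∂(W₁ z)) - ∫ ζ, (ψ ∘ myClamp) ζ ∂(W₂ z))
    (lt_of_le_of_lt (vol_fin hS1 hT1) ENNReal.one_lt_top)
    (fun z _ => by
      rw [Real.norm_eq_abs]
      have a := abs_le.1 (my_G_bound h₁ hgb z)
      have b := abs_le.1 (my_G_bound h₂ hgb z)
      rw [abs_le]; constructor <;> linarith)
  rw [Real.norm_eq_abs] at hnorm
  have htr : (volume : Measure (ℝ × ℝ)).real (S ×ˢ T) ≤ 1 :=
    ENNReal.toReal_le_of_le_ofReal (by norm_num) (by simpa using vol_fin hS1 hT1)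
  nlinarith [abs_nonneg (∫ z in S ×ˢ T,
    ((∫ ζ, (ψ ∘ myClamp) ζ ∂(W₁ z)) - ∫ ζ, (ψ ∘ myClamp) ζ ∂(W₂ z)))]

private lemma part1 {W₁ W₂ : ℝ × ℝ → Measure ℝ}
    (h₁ : ∀ p, IsProbabilityMeasure (W₁ p)) (h₂ : ∀ p, IsProbabilityMeasure (W₂ p))
    (hs₁ : ∀ p, W₁ p (Icc (-1 : ℝ) 1) = 1) (hs₂ : ∀ p, W₂ p (Icc (-1 : ℝ) 1) = 1)
    (hm₁ : Measurable W₁) (hm₂ : Measurable W₂) {S T : Set ℝ}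
    (hS1 : S ⊆ Icc 0 1) (hT1 : T ⊆ Icc 0 1) :
    W1dist (intKernel W₁ S T) (intKernel W₂ S T)
      = ⨆ ψ ∈ BLball, |∫ z in S ×ˢ T, (Gamma ψ W₁ z - Gamma ψ W₂ z)| := by
  rw [W1dist]
  have hcongr : (⨆ ψ ∈ BLball,
        ((∫ ζ, ψ ζ ∂(intKernel W₁ S T)) - ∫ ζ, ψ ζ ∂(intKernel W₂ S T)))
      = ⨆ ψ ∈ BLball, ∫ z in S ×ˢ T, (Gamma ψ W₁ z - Gamma ψ W₂ z) :=
    iSup_congr fun ψ => iSup_congr fun hψ => key_diff h₁ h₂ hs₁ hs₂ hm₁ hm₂ hS1 hT1 hψ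
  rw [hcongr]
  refine my_biSup_abs ⟨_, zero_mem_BLball⟩ (by norm_num : (0:ℝ) ≤ 2)
    (fun ψ hψ => key_bound h₁ h₂ hs₁ hs₂ hm₁ hm₂ hS1 hT1 hψ) ?_
  intro ψ hψ
  refine ⟨fun x => -ψ x, neg_mem_BLball hψ, ?_⟩
  have hneg : ∀ (W : ℝ × ℝ → Measure ℝ) z, Gamma (fun x => -ψ x) W z = -(Gamma ψ W z) :=
    fun W z => by simp [_root_.Gamma, integral_neg]
  calc ∫ z in S ×ˢ T, (Gamma (fun x => -ψ x) W₁ z - Gamma (fun x => -ψ x) W₂ z)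
      = ∫ z in S ×ˢ T, -(Gamma ψ W₁ z - Gamma ψ W₂ z) :=
        integral_congr_ae (Filter.Eventually.of_forall fun z => by simp only [hneg]; ring)
    _ = -∫ z in S ×ˢ T, (Gamma ψ W₁ z - Gamma ψ W₂ z) := integral_neg _

/-- For measure-valued kernels `W₁, W₂` and measurable `S, T ⊆ [0,1]`, the
Wasserstein-1 distance between `∫_{S×T} W₁` and `∫_{S×T} W₂` equals the supremum
over 1-bounded-Lipschitz `ψ` of `|∫_{S×T} (Γ(ψ,W₁) − Γ(ψ,W₂))|`; consequently the
generalized cut norm `sup_ψ ‖Γ(ψ,W₁) − Γ(ψ,W₂)‖_□` coincides with the Wasserstein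
cut quantity `sup_{S,T} W₁-dist(∫_{S×T} W₁, ∫_{S×T} W₂)`. -/
theorem stmt3 (W₁ W₂ : ℝ × ℝ → Measure ℝ)
    (h₁ : ∀ p, IsProbabilityMeasure (W₁ p)) (h₂ : ∀ p, IsProbabilityMeasure (W₂ p))
    (hs₁ : ∀ p, W₁ p (Icc (-1 : ℝ) 1) = 1) (hs₂ : ∀ p, W₂ p (Icc (-1 : ℝ) 1) = 1)
    (hm₁ : Measurable W₁) (hm₂ : Measurable W₂) :
    (∀ S T : Set ℝ, MeasurableSet S → MeasurableSet T → S ⊆ Icc 0 1 → T ⊆ Icc 0 1 →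
      W1dist (intKernel W₁ S T) (intKernel W₂ S T)
        = ⨆ ψ ∈ BLball, |∫ z in S ×ˢ T, (Gamma ψ W₁ z - Gamma ψ W₂ z)|)
    ∧ (⨆ ψ ∈ BLball, ⨆ q : {q : Set ℝ × Set ℝ // MeasurableSet q.1 ∧ MeasurableSet q.2 ∧
          q.1 ⊆ Icc 0 1 ∧ q.2 ⊆ Icc 0 1},
          |∫ z in q.1.1 ×ˢ q.1.2, (Gamma ψ W₁ z - Gamma ψ W₂ z)|)
      = ⨆ q : {q : Set ℝ × Set ℝ // MeasurableSet q.1 ∧ MeasurableSet q.2 ∧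
          q.1 ⊆ Icc 0 1 ∧ q.2 ⊆ Icc 0 1},
          W1dist (intKernel W₁ q.1.1 q.1.2) (intKernel W₂ q.1.1 q.1.2) := by
  constructor
  · intro S T _ _ hS1 hT1
    exact part1 h₁ h₂ hs₁ hs₂ hm₁ hm₂ hS1 hT1
  · haveI : Nonempty {q : Set ℝ × Set ℝ // MeasurableSet q.1 ∧ MeasurableSet q.2 ∧
        q.1 ⊆ Icc 0 1 ∧ q.2 ⊆ Icc 0 1} :=
      ⟨⟨(∅, ∅), MeasurableSet.empty, MeasurableSet.empty, empty_subset _, empty_subset _⟩⟩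
    refine (my_biSup_comm ⟨_, zero_mem_BLball⟩ (by norm_num : (0:ℝ) ≤ 2)
      (fun ψ _ q => abs_nonneg _)
      (fun ψ hψ q => key_bound h₁ h₂ hs₁ hs₂ hm₁ hm₂ q.2.2.2.1 q.2.2.2.2 hψ)).trans ?_
    exact iSup_congr fun q =>
      (part1 h₁ h₂ hs₁ hs₂ hm₁ hm₂ q.2.2.2.1 q.2.2.2.2).symm
end

section
/- Let (S_k)_{k ≥ 0} be a symmetric simple random walk with step size 1/n² on {0, 1/n², 2/n², …, 1} reflected at the boundary {0,1}, started at some point x of the grid, and let ℓ_n = ⌈σ²γ_n n⁴/r⁴⌉ with γ_n n² → ∞. Then (1/(γ_n n⁴)) ∑_{k=1}^{ℓ_n} 1{S_k ∈ {0,1}} → 0 in probability as n → ∞. -/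
open MeasureTheory ProbabilityTheory Filter Set

lemma fold_mid {y : ℝ} (h0 : 0 ≤ y) (h1 : y ≤ 1) : 1 - abs (1 - abs y) = y := by
  rw [abs_of_nonneg h0, abs_of_nonneg (show (0:ℝ) ≤ 1 - y by linarith)]; ring

lemma fold_neg {y : ℝ} (h0 : -1 ≤ y) (h1 : y ≤ 0) : 1 - abs (1 - abs y) = -y := by
  rw [abs_of_nonpos h1, abs_of_nonneg (show (0:ℝ) ≤ 1 - -y by linarith)]; ring

lemma fold_high {y : ℝ} (h0 : 1 ≤ y) (h1 : y ≤ 2) : 1 - abs (1 - abs y) = 2 - y := by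
  rw [abs_of_nonneg (show (0:ℝ) ≤ y by linarith),
    abs_of_nonpos (show 1 - y ≤ 0 by linarith)]; ring

lemma gridStep (m i : ℕ) (hm : 1 ≤ m) (hi : i ≤ m) {e : ℝ} (he : e = -1 ∨ e = 1) :
    ∃ j : ℕ, j ≤ m ∧ 1 - abs (1 - abs ((i : ℝ)/(m:ℝ) + e/(m:ℝ))) = (j : ℝ)/(m:ℝ) := by
  have hM : (1:ℝ) ≤ (m:ℝ) := by exact_mod_cast hm
  have hM0 : (0:ℝ) < (m:ℝ) := by linarith
  have hiR : (i:ℝ) ≤ (m:ℝ) := by exact_mod_cast hi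
  have hm1 : 1/(m:ℝ) ≤ 1 := by rw [div_le_one hM0]; linarith
  have hm1' : 0 < 1/(m:ℝ) := by positivity
  rcases he with he | he
  · subst he
    rcases Nat.eq_zero_or_pos i with h0 | h0
    · subst h0
      refine ⟨1, hm, ?_⟩
      have e1 : ((0:ℕ):ℝ)/(m:ℝ) + (-1)/(m:ℝ) = -(1/(m:ℝ)) := by push_cast; ring
      rw [e1, fold_neg (by linarith) (by linarith)]
      push_cast; ring
    · refine ⟨i - 1, by omega, ?_⟩
      have h1R : (1:ℝ) ≤ (i:ℝ) := by exact_mod_cast h0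
      have hc : ((i - 1 : ℕ) : ℝ) = (i:ℝ) - 1 := by
        rw [Nat.cast_sub h0]; norm_num
      have e1 : (i:ℝ)/(m:ℝ) + (-1)/(m:ℝ) = ((i:ℝ) - 1)/(m:ℝ) := by ring
      rw [e1, fold_mid (div_nonneg (by linarith) hM0.le)
        (by rw [div_le_one hM0]; linarith), hc]
  · subst he
    rcases eq_or_lt_of_le hi with h0 | h0
    · refine ⟨m - 1, by omega, ?_⟩
      rw [h0]
      have hc : ((m - 1 : ℕ) : ℝ) = (m:ℝ) - 1 := by
        rw [Nat.cast_sub hm]; norm_num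
      have e1 : (m:ℝ)/(m:ℝ) + 1/(m:ℝ) = 1 + 1/(m:ℝ) := by rw [div_self hM0.ne']
      rw [e1, fold_high (by linarith) (by linarith), hc]
      field_simp
      ring
    · refine ⟨i + 1, by omega, ?_⟩
      have h1R : (i:ℝ) + 1 ≤ (m:ℝ) := by exact_mod_cast h0
      have e1 : (i:ℝ)/(m:ℝ) + 1/(m:ℝ) = ((i:ℝ) + 1)/(m:ℝ) := by ring
      rw [e1, fold_mid (div_nonneg (by positivity) hM0.le)
        (by rw [div_le_one hM0]; linarith)]
      push_cast; ring

lemma keyIdentity (m i : ℕ) (hm : 1 ≤ m) (hi : i ≤ m) :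
    (1 - abs (1 - abs ((i:ℝ)/(m:ℝ) + 1/(m:ℝ)))) * (1 - (1 - abs (1 - abs ((i:ℝ)/(m:ℝ) + 1/(m:ℝ)))))
      + (1 - abs (1 - abs ((i:ℝ)/(m:ℝ) - 1/(m:ℝ)))) * (1 - (1 - abs (1 - abs ((i:ℝ)/(m:ℝ) - 1/(m:ℝ)))))
    = 2 * (((i:ℝ)/(m:ℝ)) * (1 - (i:ℝ)/(m:ℝ))) - 2 * (1/(m:ℝ))^2
      + (if (i:ℝ)/(m:ℝ) = 0 ∨ (i:ℝ)/(m:ℝ) = 1 then 2 * (1/(m:ℝ)) else 0) := by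
  have hM : (1:ℝ) ≤ (m:ℝ) := by exact_mod_cast hm
  have hM0 : (0:ℝ) < (m:ℝ) := by linarith
  have hiR : (i:ℝ) ≤ (m:ℝ) := by exact_mod_cast hi
  have hm1 : 1/(m:ℝ) ≤ 1 := by rw [div_le_one hM0]; linarith
  have hm1' : 0 < 1/(m:ℝ) := by positivity
  rcases Nat.eq_zero_or_pos i with h0 | h0
  · subst h0
    have e1 : ((0:ℕ):ℝ)/(m:ℝ) + 1/(m:ℝ) = 1/(m:ℝ) := by push_cast; ring
    have e2 : ((0:ℕ):ℝ)/(m:ℝ) - 1/(m:ℝ) = -(1/(m:ℝ)) := by push_cast; ring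
    rw [e1, e2, fold_mid hm1'.le hm1, fold_neg (by linarith) (by linarith),
      if_pos (Or.inl (by push_cast; simp))]
    push_cast
    field_simp
    ring
  · rcases eq_or_lt_of_le hi with h2 | h2
    · rw [h2]
      have e1 : (m:ℝ)/(m:ℝ) + 1/(m:ℝ) = 1 + 1/(m:ℝ) := by rw [div_self hM0.ne']
      have e2 : (m:ℝ)/(m:ℝ) - 1/(m:ℝ) = 1 - 1/(m:ℝ) := by rw [div_self hM0.ne']
      rw [e1, e2, fold_high (by linarith) (by linarith),
        fold_mid (by linarith) (by linarith),
        if_pos (Or.inr (div_self hM0.ne')), div_self hM0.ne']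
      ring
    · have h1R : (1:ℝ) ≤ (i:ℝ) := by exact_mod_cast h0
      have h2R : (i:ℝ) + 1 ≤ (m:ℝ) := by exact_mod_cast h2
      have e1 : (i:ℝ)/(m:ℝ) + 1/(m:ℝ) = ((i:ℝ) + 1)/(m:ℝ) := by ring
      have e2 : (i:ℝ)/(m:ℝ) - 1/(m:ℝ) = ((i:ℝ) - 1)/(m:ℝ) := by ring
      have hne0 : (i:ℝ)/(m:ℝ) ≠ 0 := ne_of_gt (div_pos (by linarith) hM0)
      have hne1 : (i:ℝ)/(m:ℝ) ≠ 1 :=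
        ne_of_lt (by rw [div_lt_one hM0]; linarith)
      rw [e1, e2, fold_mid (div_nonneg (by linarith) hM0.le)
          (by rw [div_le_one hM0]; linarith),
        fold_mid (div_nonneg (by linarith) hM0.le)
          (by rw [div_le_one hM0]; linarith),
        if_neg (by push_neg; exact ⟨hne0, hne1⟩)]
      field_simp
      ring


lemma quad_bound {s : ℝ} (h0 : 0 ≤ s) (h1 : s ≤ 1) :
    0 ≤ s * (1 - s) ∧ s * (1 - s) ≤ 1 := by
  constructor <;> nlinarith

lemma finalAlg {a c L r σ : ℝ} (ha : 0 < a) (hc : 1 ≤ c) (hr : 0 < r)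
    (hL : L ≤ σ^2 * a * c^4 / r^4 + 1) :
    (1 / (a * c^4)) * (c^2 + (L+1) * (1/c^2))
      ≤ 3 * (a * c^2)⁻¹ + (σ^2/r^4) * (c^2)⁻¹ := by
  have hc0 : (0:ℝ) < c := lt_of_lt_of_le one_pos hc
  have hr4 : (0:ℝ) < r^4 := pow_pos hr 4
  have h4 : (1:ℝ) ≤ c^4 := by simpa using pow_le_pow_left₀ zero_le_one hc 4
  have e : (1 / (a * c^4)) * (c^2 + (L+1) * (1/c^2))
      = (c^4 + (L+1)) / (a * c^6) := by
    field_simp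
  have e2 : 3 * (a * c^2)⁻¹ + (σ^2/r^4) * (c^2)⁻¹
      = (3 * r^4 + σ^2 * a) / (r^4 * (a * c^2)) := by
    field_simp
  have hL' : L * r^4 ≤ σ^2*a*c^4 + r^4 := by
    have := mul_le_mul_of_nonneg_right hL hr4.le
    rw [add_mul, div_mul_cancel₀ _ hr4.ne'] at this
    linarith
  have key : (c^4 + (L+1)) * r^4 ≤ (3*r^4 + σ^2*a) * c^4 := by
    nlinarith [hL', mul_le_mul_of_nonneg_left h4 hr4.le]
  rw [e, e2, div_le_div_iff₀ (by positivity) (by positivity)]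
  nlinarith [mul_le_mul_of_nonneg_right key (show (0:ℝ) ≤ a*c^2 by positivity)]

set_option maxHeartbeats 4000000 in
/-- Time spent at the boundary by a reflected symmetric random walk:
for the walk with step size `1/n²` on `[0,1]`, reflected at `{0,1}` and run for
`ℓₙ = ⌈σ²γₙn⁴/r⁴⌉` steps, `(1/(γₙn⁴)) ∑_{k=1}^{ℓₙ} 1{Sₖ ∈ {0,1}} → 0` in
probability as `n → ∞`, provided `γₙ n² → ∞`. -/
theorem stmt14 (r σ : ℝ) (hr : 0 < r) (hσ : 0 < σ)
    (γ : ℕ → ℝ) (hγpos : ∀ n, 0 < γ n) (hγ0 : Tendsto γ atTop (nhds 0))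
    (hγ : Tendsto (fun n => γ n * (n : ℝ) ^ 2) atTop atTop)
    (Ω : Type*) [MeasurableSpace Ω] (P : Measure Ω) [IsProbabilityMeasure P]
    (ξ : ℕ → ℕ → Ω → ℝ) (S : ℕ → ℕ → Ω → ℝ)
    (hξm : ∀ n k, Measurable (ξ n k))
    (hξindep : ∀ n, iIndepFun (ξ n) P)
    (hξdist : ∀ n k, Measure.map (ξ n k) P
      = (1 / 2 : ENNReal) • Measure.dirac (-1 : ℝ)
        + (1 / 2 : ENNReal) • Measure.dirac (1 : ℝ))
    (x : ℕ → ℝ) (hx : ∀ n, ∃ i : ℕ, i ≤ n ^ 2 ∧ x n = (i : ℝ) / (n : ℝ) ^ 2)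
    (hS0 : ∀ n ω, S n 0 ω = x n)
    (hSrec : ∀ n k ω,
      S n (k + 1) ω = 1 - abs (1 - abs (S n k ω + ξ n (k + 1) ω / (n : ℝ) ^ 2)))
    (ℓ : ℕ → ℕ) (hℓ : ∀ n, ℓ n = ⌈σ ^ 2 * γ n * (n : ℝ) ^ 4 / r ^ 4⌉₊) :
    ∀ δ : ℝ, 0 < δ →
      Tendsto (fun n => P {ω | δ ≤ (1 / (γ n * (n : ℝ) ^ 4))
          * ∑ k ∈ Finset.Icc 1 (ℓ n),
              (if S n k ω = 0 ∨ S n k ω = 1 then (1 : ℝ) else 0)})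
        atTop (nhds 0) := by
  intro δ hδ
  have h1 : Tendsto (fun n : ℕ => (γ n * (n:ℝ)^2)⁻¹) atTop (nhds 0) :=
    hγ.inv_tendsto_atTop
  have h2 : Tendsto (fun n : ℕ => ((n:ℝ)^2)⁻¹) atTop (nhds 0) :=
    ((tendsto_pow_atTop two_ne_zero).comp tendsto_natCast_atTop_atTop).inv_tendsto_atTop
  have hvlim : Tendsto
      (fun n : ℕ => (1/δ) * (3 * (γ n * (n:ℝ)^2)⁻¹ + (σ^2/r^4) * ((n:ℝ)^2)⁻¹))
      atTop (nhds 0) := by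
    have := ((h1.const_mul 3).add (h2.const_mul (σ^2/r^4))).const_mul (1/δ)
    simpa using this
  have hof : Tendsto
      (fun n : ℕ => ENNReal.ofReal
        ((1/δ) * (3 * (γ n * (n:ℝ)^2)⁻¹ + (σ^2/r^4) * ((n:ℝ)^2)⁻¹)))
      atTop (nhds 0) := by
    have h := ENNReal.tendsto_ofReal hvlim
    rwa [ENNReal.ofReal_zero] at h
  refine tendsto_of_tendsto_of_tendsto_of_le_of_le' tendsto_const_nhds hof
    (Eventually.of_forall fun n => zero_le) ?_
  filter_upwards [eventually_ge_atTop 1] with n hn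
  -- basic facts about n
  have hn0 : 0 < n := hn
  have hnR : (1:ℝ) ≤ (n:ℝ) := by exact_mod_cast hn
  have hm1 : 1 ≤ n^2 := Nat.one_le_pow _ _ hn0
  have hMc : ((n^2 : ℕ) : ℝ) = (n:ℝ)^2 := by push_cast; ring
  have hM1 : (1:ℝ) ≤ (n:ℝ)^2 := by simpa using pow_le_pow_left₀ zero_le_one hnR 2
  have hM0 : (0:ℝ) < (n:ℝ)^2 := by positivity
  have hγn : 0 < γ n := hγpos n
  -- measurability of S
  have hSmeas : ∀ k, Measurable (S n k) := by
    intro k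
    induction k with
    | zero =>
      have : S n 0 = fun _ => x n := funext fun ω => hS0 n ω
      rw [this]; exact measurable_const
    | succ k ih =>
      have : S n (k+1)
          = fun ω => 1 - abs (1 - abs (S n k ω + ξ n (k+1) ω / (n:ℝ)^2)) :=
        funext fun ω => hSrec n k ω
      rw [this]
      exact measurable_const.sub ((measurable_const.sub
        ((ih.add ((hξm n (k+1)).div_const _)).abs)).abs)
  -- indicator functions
  have hχmeas : ∀ k, Measurable
      (fun ω => if S n k ω = 0 ∨ S n k ω = 1 then (1:ℝ) else 0) := by
    intro k
    have hset : MeasurableSet {ω | S n k ω = 0 ∨ S n k ω = 1} := by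
      have : {ω | S n k ω = 0 ∨ S n k ω = 1}
          = S n k ⁻¹' {0} ∪ S n k ⁻¹' {1} := by
        ext ω; simp [Set.mem_preimage]
      rw [this]
      exact ((hSmeas k) (measurableSet_singleton 0)).union
        ((hSmeas k) (measurableSet_singleton 1))
    exact Measurable.ite hset measurable_const measurable_const
  have hbdd_int : ∀ (f : Ω → ℝ), Measurable f → (∀ᵐ ω ∂P, ‖f ω‖ ≤ 1) →
      Integrable f P := fun f hf hb =>
    ⟨hf.aestronglyMeasurable, HasFiniteIntegral.of_bounded hb⟩
  have hχint : ∀ k, Integrable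
      (fun ω => if S n k ω = 0 ∨ S n k ω = 1 then (1:ℝ) else 0) P := by
    intro k
    refine hbdd_int _ (hχmeas k) (Eventually.of_forall fun ω => ?_)
    split <;> simp
  -- a.e. the steps are ±1
  have haeξ : ∀ᵐ ω ∂P, ∀ k, ξ n k ω = -1 ∨ ξ n k ω = 1 := by
    rw [ae_all_iff]
    intro k
    rw [ae_iff]
    have hset : MeasurableSet ({-1,1} : Set ℝ) :=
      (measurableSet_singleton (1:ℝ)).insert (-1)
    have hpre : {ω | ¬(ξ n k ω = -1 ∨ ξ n k ω = 1)}
        = ξ n k ⁻¹' (({-1,1} : Set ℝ)ᶜ) := by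
      ext ω; simp [not_or]
    rw [hpre, ← Measure.map_apply (hξm n k) hset.compl, hξdist n k]
    simp [Measure.dirac_apply' _ hset.compl, Set.indicator_apply]
  -- a.e. the walk stays on the grid
  have hgrid : ∀ᵐ ω ∂P, ∀ k, ∃ i : ℕ, i ≤ n^2 ∧ S n k ω = (i:ℝ)/((n:ℝ)^2) := by
    filter_upwards [haeξ] with ω hω
    intro k
    induction k with
    | zero =>
      obtain ⟨i, hi, he⟩ := hx n
      exact ⟨i, hi, by rw [hS0 n ω, he]⟩
    | succ k ih =>
      obtain ⟨i, hi, he⟩ := ih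
      obtain ⟨j, hj, hfold⟩ := gridStep (n^2) i hm1 hi (hω (k+1))
      rw [hMc] at hfold
      refine ⟨j, hj, ?_⟩
      rw [hSrec n k ω, he]
      exact hfold
  -- boundedness of the walk, a.e.
  have hSbd : ∀ k, ∀ᵐ ω ∂P, 0 ≤ S n k ω ∧ S n k ω ≤ 1 := by
    intro k
    filter_upwards [hgrid] with ω hω
    obtain ⟨i, hi, he⟩ := hω k
    have hiR : (i:ℝ) ≤ (n:ℝ)^2 := by rw [← hMc]; exact_mod_cast hi
    constructor
    · rw [he]; positivity
    · rw [he, div_le_one hM0]; exact hiR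
  -- the boundary-occupation quantities
  set I : ℕ → ℝ := fun k =>
    ∫ ω, (if S n k ω = 0 ∨ S n k ω = 1 then (1:ℝ) else 0) ∂P with hIdef
  have hInn : ∀ k, 0 ≤ I k := by
    intro k
    apply integral_nonneg
    intro ω
    dsimp only
    split <;> norm_num
  -- g-integrals
  have hgmeas : ∀ k, Measurable (fun ω => S n k ω * (1 - S n k ω)) :=
    fun k => (hSmeas k).mul (measurable_const.sub (hSmeas k))
  have hgint : ∀ k, Integrable (fun ω => S n k ω * (1 - S n k ω)) P := by
    intro k
    refine hbdd_int _ (hgmeas k) ?_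
    filter_upwards [hSbd k] with ω hω
    rw [Real.norm_eq_abs, abs_le]
    have := quad_bound hω.1 hω.2
    constructor <;> linarith [this.1, this.2]
  -- independence of S n k and ξ n (k+1)
  have hFext : ∀ k, ∃ F : ((Finset.range (k+1) : Finset ℕ) → ℝ) → ℝ,
      Measurable F ∧ ∀ ω, S n k ω = F (fun i => ξ n (i:ℕ) ω) := by
    intro k
    induction k with
    | zero => exact ⟨fun _ => x n, measurable_const, fun ω => hS0 n ω⟩
    | succ k ih =>
      obtain ⟨F, hF, hFe⟩ := ih
      have hsub : ∀ i : (Finset.range (k+1) : Finset ℕ),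
          (i : ℕ) ∈ Finset.range (k+1+1) := by
        intro i
        have := i.2
        simp only [Finset.mem_range] at this ⊢
        omega
      have hmem : k + 1 ∈ Finset.range (k+1+1) := by simp
      refine ⟨fun v => 1 - abs (1 - abs (F (fun i => v ⟨(i:ℕ), hsub i⟩)
        + v ⟨k+1, hmem⟩ / (n:ℝ)^2)), ?_, ?_⟩
      · have hres : Measurable
            (fun v : ((Finset.range (k+1+1) : Finset ℕ) → ℝ) =>
              F (fun i => v ⟨(i:ℕ), hsub i⟩)) :=
          hF.comp (measurable_pi_lambda _ fun i => measurable_pi_apply _)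
        exact measurable_const.sub ((measurable_const.sub
          ((hres.add ((measurable_pi_apply _).div_const _)).abs)).abs)
      · intro ω
        rw [hSrec n k ω, hFe ω]
  have hindep : ∀ k, IndepFun (S n k) (ξ n (k+1)) P := by
    intro k
    obtain ⟨F, hF, hFe⟩ := hFext k
    have hdisj : Disjoint (Finset.range (k+1)) ({k+1} : Finset ℕ) := by
      refine Finset.disjoint_left.mpr fun a ha hb => ?_
      simp only [Finset.mem_range] at ha
      simp only [Finset.mem_singleton] at hb
      omega
    have h := (hξindep n).indepFun_finset (Finset.range (k+1)) {k+1} hdisj (hξm n)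
    have h2 := h.comp hF
      (measurable_pi_apply (⟨k+1, Finset.mem_singleton_self (k+1)⟩ : ({k+1} : Finset ℕ)))
    have e1 : S n k = F ∘ (fun a (i : (Finset.range (k+1) : Finset ℕ)) => ξ n (i:ℕ) a) :=
      funext fun ω => hFe ω
    rw [e1]
    exact h2
  -- the probability that a step is +1 is 1/2
  have hhalf : ∀ k, ∫ ω, (if ξ n (k+1) ω = 1 then (1:ℝ) else 0) ∂P = 1/2 := by
    intro k
    have hpre : (fun ω => if ξ n (k+1) ω = 1 then (1:ℝ) else 0)
        = Set.indicator (ξ n (k+1) ⁻¹' {1}) (fun _ => (1:ℝ)) := by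
      ext ω
      by_cases h : ξ n (k+1) ω = 1 <;>
        simp [Set.indicator_apply, Set.mem_preimage, h]
    have hPmeas : P (ξ n (k+1) ⁻¹' {1}) = 1/2 := by
      rw [← Measure.map_apply (hξm n (k+1)) (measurableSet_singleton 1),
        hξdist n (k+1)]
      simp [Measure.dirac_apply' _ (measurableSet_singleton (1:ℝ)),
        Set.indicator_apply, show (-1:ℝ) ≠ 1 by norm_num]
    rw [hpre, integral_indicator_const (1:ℝ)
      ((hξm n (k+1)) (measurableSet_singleton 1)), measureReal_def, hPmeas]
    simp [ENNReal.toReal_div]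
  -- the reflected quadratic test functions
  set φp : ℝ → ℝ := fun s =>
    (1 - abs (1 - abs (s + 1/(n:ℝ)^2))) * (1 - (1 - abs (1 - abs (s + 1/(n:ℝ)^2)))) with hφpdef
  set φm : ℝ → ℝ := fun s =>
    (1 - abs (1 - abs (s - 1/(n:ℝ)^2))) * (1 - (1 - abs (1 - abs (s - 1/(n:ℝ)^2)))) with hφmdef
  have hφpmeas : Measurable φp := by
    have hb : Measurable (fun s : ℝ => 1 - abs (1 - abs (s + 1/(n:ℝ)^2))) :=
      measurable_const.sub ((measurable_const.sub ((measurable_id.add_const _).abs)).abs)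
    exact hb.mul (measurable_const.sub hb)
  have hφmmeas : Measurable φm := by
    have hb : Measurable (fun s : ℝ => 1 - abs (1 - abs (s - 1/(n:ℝ)^2))) :=
      measurable_const.sub ((measurable_const.sub ((measurable_id.sub_const _).abs)).abs)
    exact hb.mul (measurable_const.sub hb)
  have hφgrid : ∀ i : ℕ, i ≤ n^2 →
      (∃ j : ℕ, j ≤ n^2 ∧ φp ((i:ℝ)/(n:ℝ)^2)
        = ((j:ℝ)/(n:ℝ)^2) * (1 - (j:ℝ)/(n:ℝ)^2)) ∧
      (∃ j : ℕ, j ≤ n^2 ∧ φm ((i:ℝ)/(n:ℝ)^2)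
        = ((j:ℝ)/(n:ℝ)^2) * (1 - (j:ℝ)/(n:ℝ)^2)) := by
    intro i hi
    constructor
    · obtain ⟨j, hj, hf⟩ := gridStep (n^2) i hm1 hi (Or.inr rfl : (1:ℝ) = -1 ∨ (1:ℝ) = 1)
      rw [hMc] at hf
      refine ⟨j, hj, ?_⟩
      simp only [hφpdef]
      rw [hf]
    · obtain ⟨j, hj, hf⟩ := gridStep (n^2) i hm1 hi (Or.inl rfl : (-1:ℝ) = -1 ∨ (-1:ℝ) = 1)
      rw [hMc] at hf
      rw [show (i:ℝ)/(n:ℝ)^2 + (-1)/(n:ℝ)^2 = (i:ℝ)/(n:ℝ)^2 - 1/(n:ℝ)^2 from by ring] at hf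
      refine ⟨j, hj, ?_⟩
      simp only [hφmdef]
      rw [hf]
  have hquad : ∀ j : ℕ, j ≤ n^2 →
      0 ≤ ((j:ℝ)/(n:ℝ)^2) * (1 - (j:ℝ)/(n:ℝ)^2)
        ∧ ((j:ℝ)/(n:ℝ)^2) * (1 - (j:ℝ)/(n:ℝ)^2) ≤ 1 := by
    intro j hj
    refine quad_bound (by positivity) ?_
    rw [div_le_one hM0, ← hMc]
    exact_mod_cast hj
  have hφbds : ∀ k, ∀ᵐ ω ∂P,
      (0 ≤ φp (S n k ω) ∧ φp (S n k ω) ≤ 1)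
        ∧ (0 ≤ φm (S n k ω) ∧ φm (S n k ω) ≤ 1) := by
    intro k
    filter_upwards [hgrid] with ω hω
    obtain ⟨i, hi, he⟩ := hω k
    rw [he]
    obtain ⟨⟨j1, hj1, e1⟩, ⟨j2, hj2, e2⟩⟩ := hφgrid i hi
    rw [e1, e2]
    exact ⟨hquad j1 hj1, hquad j2 hj2⟩
  have hφpint : ∀ k, Integrable (fun ω => φp (S n k ω)) P := by
    intro k
    refine hbdd_int _ (hφpmeas.comp (hSmeas k)) ?_
    filter_upwards [hφbds k] with ω hω
    rw [Real.norm_eq_abs, abs_le]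
    exact ⟨by linarith [hω.1.1], hω.1.2⟩
  have hφmint : ∀ k, Integrable (fun ω => φm (S n k ω)) P := by
    intro k
    refine hbdd_int _ (hφmmeas.comp (hSmeas k)) ?_
    filter_upwards [hφbds k] with ω hω
    rw [Real.norm_eq_abs, abs_le]
    exact ⟨by linarith [hω.2.1], hω.2.2⟩
  -- one-step expectation identity
  have hιmeas : Measurable (fun t : ℝ => if t = 1 then (1:ℝ) else 0) :=
    Measurable.ite (measurableSet_singleton (1:ℝ)) measurable_const measurable_const
  have hstep : ∀ k, ∫ ω, S n (k+1) ω * (1 - S n (k+1) ω) ∂P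
      = (∫ ω, S n k ω * (1 - S n k ω) ∂P) - (1/(n:ℝ)^2)^2 + (1/(n:ℝ)^2) * I k := by
    intro k
    set c : Ω → ℝ := fun ω => if ξ n (k+1) ω = 1 then (1:ℝ) else 0 with hcdef
    have hcmeas : Measurable c := hιmeas.comp (hξm n (k+1))
    have hcbd : ∀ ω, 0 ≤ c ω ∧ c ω ≤ 1 := by
      intro ω
      simp only [hcdef]
      split <;> norm_num
    have hcint : Integrable c P := by
      refine hbdd_int _ hcmeas (Eventually.of_forall fun ω => ?_)
      rw [Real.norm_eq_abs, abs_le]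
      exact ⟨by linarith [(hcbd ω).1], (hcbd ω).2⟩
    have hcpint : Integrable (fun ω => c ω * φp (S n k ω)) P := by
      refine hbdd_int _ (hcmeas.mul (hφpmeas.comp (hSmeas k))) ?_
      filter_upwards [hφbds k] with ω hω
      rw [Real.norm_eq_abs, abs_mul]
      refine mul_le_one₀ (abs_le.mpr ⟨by linarith [(hcbd ω).1], (hcbd ω).2⟩)
        (abs_nonneg _) (abs_le.mpr ⟨by linarith [hω.1.1], hω.1.2⟩)
    have hcmint : Integrable (fun ω => c ω * φm (S n k ω)) P := by
      refine hbdd_int _ (hcmeas.mul (hφmmeas.comp (hSmeas k))) ?_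
      filter_upwards [hφbds k] with ω hω
      rw [Real.norm_eq_abs, abs_mul]
      refine mul_le_one₀ (abs_le.mpr ⟨by linarith [(hcbd ω).1], (hcbd ω).2⟩)
        (abs_nonneg _) (abs_le.mpr ⟨by linarith [hω.2.1], hω.2.2⟩)
    have hdecomp : ∀ᵐ ω ∂P, S n (k+1) ω * (1 - S n (k+1) ω)
        = c ω * φp (S n k ω) + φm (S n k ω) - c ω * φm (S n k ω) := by
      filter_upwards [haeξ] with ω hω
      rcases hω (k+1) with he | he
      · have hc0 : c ω = 0 := by
          simp only [hcdef]
          rw [if_neg]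
          rw [he]; norm_num
        rw [hSrec n k ω, he, hc0]
        simp only [hφmdef]
        rw [show S n k ω + (-1)/(n:ℝ)^2 = S n k ω - 1/(n:ℝ)^2 from by ring]
        ring
      · have hc1 : c ω = 1 := by
          simp only [hcdef]
          rw [if_pos he]
        rw [hSrec n k ω, he, hc1]
        simp only [hφpdef, hφmdef]
        ring
    have hcval : ∫ ω, c ω ∂P = 1/2 := by
      simp only [hcdef]
      exact hhalf k
    have hip : ∫ ω, c ω * φp (S n k ω) ∂P = 1/2 * ∫ ω, φp (S n k ω) ∂P := by
      have hInd : IndepFun (fun ω => φp (S n k ω)) c P := (hindep k).comp hφpmeas hιmeas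
      have h := hInd.symm.integral_mul_eq_mul_integral hcint.aestronglyMeasurable (hφpint k).aestronglyMeasurable
      calc ∫ ω, c ω * φp (S n k ω) ∂P
          = ∫ ω, (c * fun ω' => φp (S n k ω')) ω ∂P := rfl
        _ = (∫ ω, c ω ∂P) * ∫ ω, φp (S n k ω) ∂P := h
        _ = 1/2 * ∫ ω, φp (S n k ω) ∂P := by rw [hcval]
    have him : ∫ ω, c ω * φm (S n k ω) ∂P = 1/2 * ∫ ω, φm (S n k ω) ∂P := by
      have hInd : IndepFun (fun ω => φm (S n k ω)) c P := (hindep k).comp hφmmeas hιmeas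
      have h := hInd.symm.integral_mul_eq_mul_integral hcint.aestronglyMeasurable (hφmint k).aestronglyMeasurable
      calc ∫ ω, c ω * φm (S n k ω) ∂P
          = ∫ ω, (c * fun ω' => φm (S n k ω')) ω ∂P := rfl
        _ = (∫ ω, c ω ∂P) * ∫ ω, φm (S n k ω) ∂P := h
        _ = 1/2 * ∫ ω, φm (S n k ω) ∂P := by rw [hcval]
    have hkey : ∀ᵐ ω ∂P, φp (S n k ω) + φm (S n k ω)
        = 2 * (S n k ω * (1 - S n k ω)) - 2*(1/(n:ℝ)^2)^2
          + (if S n k ω = 0 ∨ S n k ω = 1 then 2*(1/(n:ℝ)^2) else 0) := by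
      filter_upwards [hgrid] with ω hω
      obtain ⟨i, hi, he⟩ := hω k
      rw [he]
      simp only [hφpdef, hφmdef]
      have hki := keyIdentity (n^2) i hm1 hi
      rw [hMc] at hki
      exact hki
    calc ∫ ω, S n (k+1) ω * (1 - S n (k+1) ω) ∂P
        = ∫ ω, (c ω * φp (S n k ω) + φm (S n k ω) - c ω * φm (S n k ω)) ∂P :=
          integral_congr_ae hdecomp
      _ = (∫ ω, (c ω * φp (S n k ω) + φm (S n k ω)) ∂P)
            - ∫ ω, c ω * φm (S n k ω) ∂P :=
          integral_sub (hcpint.add (hφmint k)) hcmint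
      _ = (∫ ω, c ω * φp (S n k ω) ∂P) + (∫ ω, φm (S n k ω) ∂P)
            - ∫ ω, c ω * φm (S n k ω) ∂P := by
          rw [integral_add hcpint (hφmint k)]
      _ = 1/2 * (∫ ω, φp (S n k ω) ∂P) + (∫ ω, φm (S n k ω) ∂P)
            - 1/2 * ∫ ω, φm (S n k ω) ∂P := by
          rw [hip, him]
      _ = 1/2 * ((∫ ω, φp (S n k ω) ∂P) + ∫ ω, φm (S n k ω) ∂P) := by ring
      _ = 1/2 * ∫ ω, (φp (S n k ω) + φm (S n k ω)) ∂P := by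
          rw [integral_add (hφpint k) (hφmint k)]
      _ = 1/2 * ∫ ω, (2 * (S n k ω * (1 - S n k ω)) - 2*(1/(n:ℝ)^2)^2
            + (if S n k ω = 0 ∨ S n k ω = 1 then 2*(1/(n:ℝ)^2) else 0)) ∂P := by
          rw [integral_congr_ae hkey]
      _ = (∫ ω, S n k ω * (1 - S n k ω) ∂P) - (1/(n:ℝ)^2)^2 + (1/(n:ℝ)^2) * I k := by
          have e1 : ∀ ω, (2 * (S n k ω * (1 - S n k ω)) - 2*(1/(n:ℝ)^2)^2
              + (if S n k ω = 0 ∨ S n k ω = 1 then 2*(1/(n:ℝ)^2) else 0))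
              = (2 * (S n k ω * (1 - S n k ω)) - 2*(1/(n:ℝ)^2)^2)
                + (2*(1/(n:ℝ)^2)) * (if S n k ω = 0 ∨ S n k ω = 1 then (1:ℝ) else 0) := by
            intro ω
            by_cases h : S n k ω = 0 ∨ S n k ω = 1 <;> simp [h]
          have hf1 : Integrable
              (fun ω => 2 * (S n k ω * (1 - S n k ω)) - 2*(1/(n:ℝ)^2)^2) P := by
            exact ((hgint k).const_mul 2).sub (integrable_const _)
          have hf2 : Integrable (fun ω => (2*(1/(n:ℝ)^2))
              * (if S n k ω = 0 ∨ S n k ω = 1 then (1:ℝ) else 0)) P :=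
            (hχint k).const_mul _
          have hf3 : Integrable (fun ω => 2 * (S n k ω * (1 - S n k ω))) P :=
            (hgint k).const_mul 2
          have i2 : ∫ ω, 2 * (S n k ω * (1 - S n k ω)) ∂P
              = 2 * ∫ ω, S n k ω * (1 - S n k ω) ∂P := integral_const_mul 2 _
          have i1 : ∫ ω, (2*(1/(n:ℝ)^2))
              * (if S n k ω = 0 ∨ S n k ω = 1 then (1:ℝ) else 0) ∂P
              = (2*(1/(n:ℝ)^2)) * I k := by
            rw [integral_const_mul]
            try simp only [hIdef]
          rw [integral_congr_ae (Eventually.of_forall e1),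
            integral_add hf1 hf2,
            integral_sub hf3 (integrable_const _), i2, i1, integral_const]
          simp only [measure_univ, probReal_univ, ENNReal.toReal_one, smul_eq_mul, one_mul]
          ring
  -- telescoping
  have htel : ∀ K : ℕ, (1/(n:ℝ)^2) * ∑ k ∈ Finset.range K, I k
      = (∫ ω, S n K ω * (1 - S n K ω) ∂P)
        - (∫ ω, S n 0 ω * (1 - S n 0 ω) ∂P) + (K:ℝ) * (1/(n:ℝ)^2)^2 := by
    intro K
    induction K with
    | zero => simp
    | succ K ih =>
      rw [Finset.sum_range_succ, mul_add, ih, hstep K]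
      push_cast
      ring
  have hE1 : (∫ ω, S n (ℓ n + 1) ω * (1 - S n (ℓ n + 1) ω) ∂P) ≤ 1 := by
    have h := integral_mono_ae (hgint (ℓ n + 1)) (integrable_const 1)
      (by filter_upwards [hSbd (ℓ n + 1)] with ω hω
          exact (quad_bound hω.1 hω.2).2)
    simpa [measure_univ] using h
  have hE0 : 0 ≤ ∫ ω, S n 0 ω * (1 - S n 0 ω) ∂P :=
    integral_nonneg_of_ae (by
      filter_upwards [hSbd 0] with ω hω
      exact (quad_bound hω.1 hω.2).1)
  have hsum : ∑ k ∈ Finset.range (ℓ n + 1), I k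
      ≤ (n:ℝ)^2 + (((ℓ n):ℝ)+1) * (1/(n:ℝ)^2) := by
    have h2 : (1/(n:ℝ)^2) * ∑ k ∈ Finset.range (ℓ n + 1), I k
        ≤ 1 + (((ℓ n):ℝ)+1) * (1/(n:ℝ)^2)^2 := by
      rw [htel (ℓ n + 1)]
      push_cast
      have := hE1
      have := hE0
      have hnn : (0:ℝ) ≤ (((ℓ n):ℝ)+1) * (1/(n:ℝ)^2)^2 := by positivity
      linarith
    have h3 := mul_le_mul_of_nonneg_left h2 hM0.le
    calc ∑ k ∈ Finset.range (ℓ n + 1), I k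
        = (n:ℝ)^2 * ((1/(n:ℝ)^2) * ∑ k ∈ Finset.range (ℓ n + 1), I k) := by
          field_simp
      _ ≤ (n:ℝ)^2 * (1 + (((ℓ n):ℝ)+1) * (1/(n:ℝ)^2)^2) := h3
      _ = (n:ℝ)^2 + (((ℓ n):ℝ)+1) * (1/(n:ℝ)^2) := by
          field_simp
  have hsub2 : ∑ k ∈ Finset.Icc 1 (ℓ n), I k ≤ ∑ k ∈ Finset.range (ℓ n + 1), I k := by
    refine Finset.sum_le_sum_of_subset_of_nonneg ?_ (fun k _ _ => hInn k)
    intro a ha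
    simp only [Finset.mem_Icc] at ha
    simp only [Finset.mem_range]
    omega
  -- Markov's inequality
  have hcoef : (0:ℝ) < γ n * (n:ℝ)^4 := mul_pos hγn (by positivity)
  have hYnn : 0 ≤ᵐ[P] (fun ω => (1 / (γ n * (n:ℝ)^4))
      * ∑ k ∈ Finset.Icc 1 (ℓ n), (if S n k ω = 0 ∨ S n k ω = 1 then (1:ℝ) else 0)) :=
    Eventually.of_forall fun ω => mul_nonneg (one_div_pos.mpr hcoef).le
      (Finset.sum_nonneg fun k _ => by split <;> norm_num)
  have hYint : Integrable (fun ω => (1 / (γ n * (n:ℝ)^4))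
      * ∑ k ∈ Finset.Icc 1 (ℓ n), (if S n k ω = 0 ∨ S n k ω = 1 then (1:ℝ) else 0)) P :=
    (integrable_finset_sum _ (fun k _ => hχint k)).const_mul _
  have hMar := mul_meas_ge_le_integral_of_nonneg hYnn hYint δ
  have hIntY : ∫ ω, (1 / (γ n * (n:ℝ)^4))
      * ∑ k ∈ Finset.Icc 1 (ℓ n), (if S n k ω = 0 ∨ S n k ω = 1 then (1:ℝ) else 0) ∂P
      = (1 / (γ n * (n:ℝ)^4)) * ∑ k ∈ Finset.Icc 1 (ℓ n), I k := by
    rw [integral_const_mul, integral_finset_sum _ (fun k _ => hχint k)]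
    try simp only [hIdef]
  have hLbd : ((ℓ n : ℝ)) ≤ σ^2 * γ n * (n:ℝ)^4 / r^4 + 1 := by
    rw [hℓ n]
    refine (Nat.ceil_lt_add_one ?_).le
    apply div_nonneg _ (by positivity)
    exact mul_nonneg (mul_nonneg (by positivity) hγn.le) (by positivity)
  have hfinal : (1 / (γ n * (n:ℝ)^4)) * ∑ k ∈ Finset.Icc 1 (ℓ n), I k
      ≤ 3 * (γ n * (n:ℝ)^2)⁻¹ + (σ^2/r^4) * ((n:ℝ)^2)⁻¹ := by
    have step1 : (1 / (γ n * (n:ℝ)^4)) * ∑ k ∈ Finset.Icc 1 (ℓ n), I k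
        ≤ (1 / (γ n * (n:ℝ)^4)) * ((n:ℝ)^2 + (((ℓ n):ℝ)+1) * (1/(n:ℝ)^2)) :=
      mul_le_mul_of_nonneg_left (le_trans hsub2 hsum) (one_div_pos.mpr hcoef).le
    exact step1.trans (finalAlg hγn hnR hr hLbd)
  -- conclude
  have hPle : (P {ω | δ ≤ (1 / (γ n * (n:ℝ)^4))
      * ∑ k ∈ Finset.Icc 1 (ℓ n), (if S n k ω = 0 ∨ S n k ω = 1 then (1:ℝ) else 0)}).toReal
      ≤ (1/δ) * (3 * (γ n * (n:ℝ)^2)⁻¹ + (σ^2/r^4) * ((n:ℝ)^2)⁻¹) := by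
    rw [hIntY] at hMar
    have h2 := hMar.trans hfinal
    calc (P _).toReal
        = (1/δ) * (δ * (P _).toReal) := by field_simp
      _ ≤ (1/δ) * (3 * (γ n * (n:ℝ)^2)⁻¹ + (σ^2/r^4) * ((n:ℝ)^2)⁻¹) :=
          mul_le_mul_of_nonneg_left h2 (by positivity)
  calc P {ω | δ ≤ (1 / (γ n * (n:ℝ)^4))
      * ∑ k ∈ Finset.Icc 1 (ℓ n), (if S n k ω = 0 ∨ S n k ω = 1 then (1:ℝ) else 0)}
      = ENNReal.ofReal ((P {ω | δ ≤ (1 / (γ n * (n:ℝ)^4))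
        * ∑ k ∈ Finset.Icc 1 (ℓ n), (if S n k ω = 0 ∨ S n k ω = 1 then (1:ℝ) else 0)}).toReal) :=
        (ENNReal.ofReal_toReal (measure_ne_top P _)).symm
    _ ≤ ENNReal.ofReal ((1/δ) * (3 * (γ n * (n:ℝ)^2)⁻¹ + (σ^2/r^4) * ((n:ℝ)^2)⁻¹)) :=
        ENNReal.ofReal_le_ofReal hPle
end
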